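/- arXiv:1401.0855 — 4 statements merged into one kernel-verified Lean document; each statement's English description precedes it below -/
import Mathlib

section
/- Suppose δ ≥ 1 - 1/N with δ ∈ [0,1). For any vector v ∈ ℝ^N with v_n ≥ 0 for all n and Σ_n v_n = 1, there exists a sensor n and a vector v' ∈ ℝ^N with v'_m ≥ 0 for all m and Σ_m v'_m = 1 such that v_n = (1-δ) + δ·v'_n and v_m = δ·v'_m for all m ≠ n. -/
/-- if δ ≥ 1 - 1/N, every point of the standard simplex can be decomposed as
allocating the current slot to some sensor n plus δ times a feasible continuation vector. -/
theorem simplex_decomposition (N : ℕ) (hN : 1 ≤ N) (δ : ℝ) (hδ0 : 0 ≤ δ) (hδ1 : δ < 1)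
    (hδN : δ ≥ 1 - 1 / N) (v : Fin N → ℝ) (hv0 : ∀ n, 0 ≤ v n) (hv1 : ∑ n, v n = 1) :
    ∃ (n : Fin N) (v' : Fin N → ℝ), (∀ m, 0 ≤ v' m) ∧ (∑ m, v' m = 1) ∧
      v n = (1 - δ) + δ * v' n ∧ ∀ m, m ≠ n → v m = δ * v' m := by
  rcases eq_or_lt_of_le hN with h1 | h2
  · -- N = 1
    subst h1
    refine ⟨0, v, hv0, hv1, ?_, ?_⟩
    · have : v 0 = 1 := by simpa using hv1
      rw [this]; ring
    · intro m hm
      exact absurd (Subsingleton.elim m 0) hm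
  · -- N ≥ 2, so δ > 0
    have hN2 : (2 : ℝ) ≤ N := by exact_mod_cast h2
    have hδpos : 0 < δ := by
      have : 1 - 1 / (N : ℝ) ≥ 1 - 1 / 2 := by
        have : (1:ℝ)/N ≤ 1/2 := by
          apply one_div_le_one_div_of_le <;> linarith
        linarith
      linarith
    haveI : Nonempty (Fin N) := ⟨⟨0, hN⟩⟩
    obtain ⟨n, hn⟩ := Finite.exists_max v
    have hNpos : (0:ℝ) < N := by linarith
    have hvn : 1 / (N : ℝ) ≤ v n := by
      rw [div_le_iff₀ hNpos]
      calc (1:ℝ) = ∑ m, v m := hv1.symm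
        _ ≤ ∑ _m : Fin N, v n := Finset.sum_le_sum fun m _ => hn m
        _ = v n * N := by simp [Finset.sum_const, mul_comm]
    have hkey : 1 - δ ≤ v n := le_trans (by linarith) hvn
    refine ⟨n, fun m => if m = n then (v n - (1 - δ)) / δ else v m / δ, ?_, ?_, ?_, ?_⟩
    · intro m
      dsimp only
      by_cases hm : m = n
      · rw [if_pos hm]; exact div_nonneg (by linarith) hδpos.le
      · rw [if_neg hm]; exact div_nonneg (hv0 m) hδpos.le
    · have heq : ∀ m : Fin N, (if m = n then (v n - (1 - δ)) / δ else v m / δ) =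
          v m / δ + (if m = n then -((1 - δ) / δ) else 0) := by
        intro m; by_cases hm : m = n <;> simp [hm] <;> ring
      simp only [heq, Finset.sum_add_distrib, ← Finset.sum_div, hv1,
        Finset.sum_ite_eq' Finset.univ n, Finset.mem_univ, if_true]
      field_simp
      ring
    · dsimp only
      rw [if_pos rfl]
      field_simp
      ring
    · intro m hm
      dsimp only
      rw [if_neg hm]
      field_simp [hm]
end

section
/- Suppose δ ∈ [0,1) satisfies δ ≥ 1 - 1/N. Then for any target vector v in the standard simplex {v ∈ ℝ^N : v_n ≥ 0, Σ_n v_n = 1}, there exists an allocation s : ℕ → Fin N such that for every sensor n, (1-δ)·Σ_{t=1}^∞ δ^{t-1}·1(s(t)=n) = v_n. -/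
/-- if δ ≥ 1 - 1/N, every point of the standard simplex is achievable as the
vector of normalized weighted sum rates of some allocation. -/
theorem simplex_achievable (N : ℕ) (hN : 1 ≤ N) (δ : ℝ) (hδ0 : 0 ≤ δ) (hδ1 : δ < 1)
    (hδN : δ ≥ 1 - 1 / N) (v : Fin N → ℝ) (hv0 : ∀ n, 0 ≤ v n) (hv1 : ∑ n, v n = 1) :
    ∃ s : ℕ → Fin N, ∀ n,
      (1 - δ) * ∑' t : ℕ, δ ^ t * (if s t = n then (1 : ℝ) else 0) = v n := by
  classical
  rcases eq_or_lt_of_le hδ0 with hδz | hδpos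
  · -- δ = 0, hence N = 1
    have hδ : δ = 0 := hδz.symm
    subst hδ
    have hNr : (1:ℝ) ≤ N := by exact_mod_cast hN
    have hNpos : (0:ℝ) < N := by linarith
    have h1 : (1:ℝ) ≤ 1 / N := by linarith
    have hle : (N:ℝ) ≤ 1 := by
      rw [le_div_iff₀ hNpos] at h1; linarith
    have hN1 : N = 1 := by
      have : (N:ℕ) ≤ 1 := by exact_mod_cast hle
      omega
    subst hN1
    refine ⟨fun _ => 0, fun n => ?_⟩
    have hn : n = 0 := Subsingleton.elim _ _
    subst hn
    have hv : v 0 = 1 := by simpa [Fin.sum_univ_one] using hv1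
    have hts : ∑' t : ℕ, (0:ℝ) ^ t * (if (0 : Fin 1) = 0 then (1:ℝ) else 0) = 1 := by
      rw [tsum_eq_single 0]
      · simp
      · intro b hb; simp [zero_pow hb]
    rw [hts, hv]; ring
  · -- δ > 0
    have hNr : (0:ℝ) < N := by exact_mod_cast hN
    have h1N : 1 - δ ≤ 1 / (N:ℝ) := by linarith
    set pick : (Fin N → ℝ) → Fin N := fun w =>
      if h : ∃ n, 1/(N:ℝ) ≤ w n then h.choose else ⟨0, hN⟩ with hpick
    have pick_spec : ∀ w : Fin N → ℝ, ∑ m, w m = 1 → 1/(N:ℝ) ≤ w (pick w) := by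
      intro w hw
      have hex : ∃ n, 1/(N:ℝ) ≤ w n := by
        have hsum : ∑ _m : Fin N, 1/(N:ℝ) ≤ ∑ m, w m := by
          rw [hw, Finset.sum_const, Finset.card_univ, Fintype.card_fin, nsmul_eq_mul]
          rw [mul_one_div, div_self (ne_of_gt hNr)]
        obtain ⟨i, _, hi⟩ := Finset.exists_le_of_sum_le ⟨⟨0, hN⟩, Finset.mem_univ _⟩ hsum
        exact ⟨i, hi⟩
      rw [hpick]; simp only [dif_pos hex]; exact hex.choose_spec
    set step : (Fin N → ℝ) → (Fin N → ℝ) :=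
      fun w m => (w m - if m = pick w then 1 - δ else 0) / δ with hstep
    set W : ℕ → Fin N → ℝ := fun t => step^[t] v with hW
    have W_succ : ∀ t, W (t+1) = step (W t) := fun t =>
      Function.iterate_succ_apply' step t v
    have W_zero : W 0 = v := rfl
    set s : ℕ → Fin N := fun t => pick (W t) with hs
    have inv : ∀ t, (∀ m, 0 ≤ W t m) ∧ ∑ m, W t m = 1 := by
      intro t
      induction t with
      | zero => exact ⟨hv0, hv1⟩
      | succ t ih =>
        obtain ⟨h0, h1⟩ := ih
        constructor
        · intro m
          rw [W_succ]
          show 0 ≤ (W t m - if m = pick (W t) then 1 - δ else 0) / δ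
          apply div_nonneg _ hδpos.le
          split
          · rename_i h
            have := pick_spec (W t) h1
            rw [← h] at this
            linarith
          · linarith [h0 m]
        · rw [W_succ]
          show (∑ m, (W t m - if m = pick (W t) then 1 - δ else 0) / δ) = 1
          rw [← Finset.sum_div, Finset.sum_sub_distrib, h1]
          rw [Finset.sum_ite_eq' Finset.univ (pick (W t)) (fun _ => (1:ℝ) - δ)]
          simp only [Finset.mem_univ, if_true]
          field_simp
          ring
        
    have key : ∀ n T, (∑ t ∈ Finset.range T,
        (1 - δ) * (δ ^ t * (if s t = n then (1:ℝ) else 0))) + δ ^ T * W T n = v n := by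
      intro n T
      induction T with
      | zero => simp [W_zero]
      | succ T ih =>
        rw [Finset.sum_range_succ, pow_succ]
        have hWn : W (T+1) n = (W T n - if n = pick (W T) then 1 - δ else 0) / δ := by
          rw [W_succ]
        rw [hWn]
        have hsT : s T = pick (W T) := rfl
        by_cases hc : s T = n
        · rw [if_pos hc, if_pos (hsT ▸ hc.symm)]
          rw [← ih]
          field_simp
          ring
        · rw [if_neg hc, if_neg (fun h => hc (hsT ▸ h.symm))]
          rw [← ih]
          field_simp
          ring
    refine ⟨s, fun n => ?_⟩
    have hWle : ∀ T, W T n ≤ 1 := by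
      intro T
      obtain ⟨h0, h1⟩ := inv T
      calc W T n ≤ ∑ m, W T m :=
            Finset.single_le_sum (fun i _ => h0 i) (Finset.mem_univ n)
        _ = 1 := h1
    have hlim : Filter.Tendsto (fun T => δ ^ T * W T n) Filter.atTop (nhds 0) := by
      apply squeeze_zero (fun T => mul_nonneg (pow_nonneg hδ0 T) ((inv T).1 n))
        (fun T => mul_le_of_le_one_right (pow_nonneg hδ0 T) (hWle T))
      exact tendsto_pow_atTop_nhds_zero_of_lt_one hδ0 hδ1
    have hsum : HasSum (fun t => (1 - δ) * (δ ^ t * (if s t = n then (1:ℝ) else 0))) (v n) := by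
      rw [hasSum_iff_tendsto_nat_of_nonneg]
      · have : (fun T => ∑ t ∈ Finset.range T,
            (1 - δ) * (δ ^ t * (if s t = n then (1:ℝ) else 0)))
            = fun T => v n - δ ^ T * W T n := by
          funext T
          linarith [key n T]
        rw [this]
        simpa using Filter.Tendsto.sub (tendsto_const_nhds (x := v n)) hlim
      · intro i
        apply mul_nonneg (by linarith)
        apply mul_nonneg (pow_nonneg hδ0 i)
        split <;> norm_num
    rw [← tsum_mul_left]
    exact hsum.tsum_eq
end

section
/- If δ ∈ [0, 1 - 1/N), then the set of achievable normalized weighted sum rate vectors {v : v_n = (1-δ)·Σ_{t=1}^∞ δ^{t-1}·1(s(t)=n) for some allocation s : ℕ → Fin N} is a strict subset of the standard simplex. -/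
/-- if δ < 1 - 1/N, the achievable set of normalized weighted sum rate vectors
is a strict subset of the standard simplex. -/
theorem achievable_ssubset (N : ℕ) (hN : 2 ≤ N) (δ : ℝ) (hδ0 : 0 ≤ δ) (hδ1 : δ < 1 - 1 / N) :
    { v : Fin N → ℝ | ∃ s : ℕ → Fin N, ∀ n,
        v n = (1 - δ) * ∑' t : ℕ, δ ^ t * (if s t = n then (1 : ℝ) else 0) }
      ⊂ { v : Fin N → ℝ | (∀ n, 0 ≤ v n) ∧ ∑ n, v n = 1 } := by
  have hNpos : (0 : ℝ) < N := by positivity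
  have hNinv : (0 : ℝ) < 1 / N := by positivity
  have hδlt1 : δ < 1 := lt_of_lt_of_le hδ1 (by linarith)
  have h1δ : 0 < 1 - δ := by linarith
  have hsum : ∀ (s : ℕ → Fin N) (n : Fin N),
      Summable (fun t : ℕ => δ ^ t * (if s t = n then (1 : ℝ) else 0)) := by
    intro s n
    apply Summable.of_nonneg_of_le (fun t => ?_) (fun t => ?_)
      (summable_geometric_of_lt_one hδ0 hδlt1)
    · positivity
    · by_cases h : s t = n <;> simp [h] <;> positivity
  constructor
  · rintro v ⟨s, hv⟩
    constructor
    · intro n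
      rw [hv n]
      apply mul_nonneg h1δ.le
      apply tsum_nonneg
      intro t; positivity
    · have : ∑ n, v n = (1 - δ) * ∑ n, ∑' t : ℕ, δ ^ t * (if s t = n then (1 : ℝ) else 0) := by
        rw [Finset.mul_sum]; exact Finset.sum_congr rfl (fun n _ => hv n)
      rw [this, ← Summable.tsum_finsetSum (fun n _ => hsum s n)]
      have : ∀ t : ℕ, ∑ n, δ ^ t * (if s t = n then (1 : ℝ) else 0) = δ ^ t := by
        intro t
        rw [← Finset.mul_sum]
        simp
      rw [tsum_congr this, tsum_geometric_of_lt_one hδ0 hδlt1]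
      field_simp
  · intro hsub
    have hmem : (fun _ : Fin N => (1 : ℝ) / N) ∈
        { v : Fin N → ℝ | (∀ n, 0 ≤ v n) ∧ ∑ n, v n = 1 } := by
      constructor
      · intro n; positivity
      · simp [Finset.sum_const]
        field_simp
    obtain ⟨s, hv⟩ := hsub hmem
    have h := hv (s 0)
    have hge : (1 : ℝ) ≤ ∑' t : ℕ, δ ^ t * (if s t = s 0 then (1 : ℝ) else 0) := by
      have := Summable.le_tsum (hsum s (s 0)) 0 (fun t _ => by positivity)
      simpa using this
    have : 1 - δ ≤ 1 / N := by
      calc 1 - δ = (1 - δ) * 1 := by ring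
        _ ≤ (1 - δ) * ∑' t : ℕ, δ ^ t * (if s t = s 0 then (1 : ℝ) else 0) := by
            exact mul_le_mul_of_nonneg_left hge h1δ.le
        _ = 1 / N := h.symm
    linarith
end

section
/- Let δ ∈ [0,1) with δ ≥ 1 - 1/N and let v⁰ be in the standard simplex of ℝ^N. Define recursively: at each step t ≥ 1 choose n_t maximizing v^{t-1}_n, and set v^t_{n_t} = (v^{t-1}_{n_t} - 1 + δ)/δ, v^t_m = v^{t-1}_m/δ for m ≠ n_t. Then v^t remains in the standard simplex for all t, and the induced allocation s(t) = n_t satisfies (1-δ)·Σ_{t=1}^∞ δ^{t-1}·1(s(t)=n) = v⁰_n for every n. -/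
/-- the greedy (largest-remaining-target) decomposition, run forever, keeps
the state in the simplex and realizes exactly the target normalized weighted sum rates. -/
theorem greedy_achieves_target (N : ℕ) (hN : 1 ≤ N) (δ : ℝ) (hδ0 : 0 < δ) (hδ1 : δ < 1)
    (hδN : δ ≥ 1 - 1 / N) (v0 : Fin N → ℝ) (hv0 : ∀ n, 0 ≤ v0 n) (hv1 : ∑ n, v0 n = 1)
    (nt : ℕ → Fin N) (v : ℕ → Fin N → ℝ)
    (hinit : v 0 = v0)
    (hargmax : ∀ t m, v t m ≤ v t (nt t))
    (hstep : ∀ t m, v (t + 1) m =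
      if m = nt t then (v t (nt t) - 1 + δ) / δ else v t m / δ) :
    (∀ t, (∀ n, 0 ≤ v t n) ∧ ∑ n, v t n = 1) ∧
    (∀ n, (1 - δ) * ∑' t : ℕ, δ ^ t * (if nt t = n then (1 : ℝ) else 0) = v0 n) := by
  have hNpos : (0:ℝ) < N := by exact_mod_cast Nat.lt_of_lt_of_le Nat.zero_lt_one hN
  -- invariant
  have hinv : ∀ t, (∀ n, 0 ≤ v t n) ∧ ∑ n, v t n = 1 := by
    intro t
    induction t with
    | zero => rw [hinit]; exact ⟨hv0, hv1⟩
    | succ t ih =>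
      obtain ⟨hpos, hsum⟩ := ih
      have hmax : (1:ℝ) ≤ N * v t (nt t) := by
        calc (1:ℝ) = ∑ n, v t n := hsum.symm
          _ ≤ ∑ _n : Fin N, v t (nt t) := Finset.sum_le_sum (fun n _ => hargmax t n)
          _ = N * v t (nt t) := by simp [Finset.sum_const, Finset.card_univ, mul_comm]
      have h1δ : 1 - δ ≤ v t (nt t) := by
        have h1 : 1 - δ ≤ 1 / N := by linarith
        have h2 : (1:ℝ)/N ≤ v t (nt t) := by
          rw [div_le_iff₀ hNpos] at *
          nlinarith
        linarith
      have heq : ∀ m, v (t+1) m = v t m / δ + (if m = nt t then (δ - 1)/δ else 0) := by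
        intro m
        rw [hstep]
        by_cases h : m = nt t
        · subst h; simp; field_simp; ring
        · simp [h]
      constructor
      · intro n
        rw [hstep]
        by_cases h : n = nt t
        · simp [h]
          apply div_nonneg _ hδ0.le
          linarith
        · simp [h]
          exact div_nonneg (hpos n) hδ0.le
      · have : ∑ n, v (t+1) n = ∑ n, (v t n / δ + (if n = nt t then (δ - 1)/δ else 0)) :=
          Finset.sum_congr rfl (fun n _ => heq n)
        rw [this, Finset.sum_add_distrib, ← Finset.sum_div, hsum]
        rw [Finset.sum_ite_eq' Finset.univ (nt t)]
        simp
        field_simp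
        ring
  refine ⟨hinv, ?_⟩
  intro n
  -- one-step recurrence
  have hrec : ∀ t, v t n = (1-δ) * (if nt t = n then (1:ℝ) else 0) + δ * v (t+1) n := by
    intro t
    rw [hstep]
    by_cases h : n = nt t
    · subst h; simp; field_simp; ring
    · rw [if_neg h, if_neg (Ne.symm h)]
      field_simp
      ring
  -- telescoping
  have htel : ∀ T, v 0 n =
      (∑ t ∈ Finset.range T, (1-δ) * (δ ^ t * (if nt t = n then (1:ℝ) else 0)))
        + δ ^ T * v T n := by
    intro T
    induction T with
    | zero => simp
    | succ T ih =>
      rw [Finset.sum_range_succ, ih, hrec T]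
      ring
  have hVle : ∀ T, v T n ≤ 1 := by
    intro T
    obtain ⟨hpos, hsum⟩ := hinv T
    calc v T n ≤ ∑ m, v T m := Finset.single_le_sum (fun m _ => hpos m) (Finset.mem_univ n)
      _ = 1 := hsum
  have htail : Filter.Tendsto (fun T => δ ^ T * v T n) Filter.atTop (nhds 0) := by
    have hδpow : Filter.Tendsto (fun T : ℕ => δ ^ T) Filter.atTop (nhds 0) :=
      tendsto_pow_atTop_nhds_zero_of_lt_one hδ0.le hδ1
    apply squeeze_zero (fun T => mul_nonneg (pow_nonneg hδ0.le T) ((hinv T).1 n))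
      (fun T => ?_) hδpow
    calc δ ^ T * v T n ≤ δ ^ T * 1 :=
          mul_le_mul_of_nonneg_left (hVle T) (pow_nonneg hδ0.le T)
      _ = δ ^ T := mul_one _
  have hHasSum : HasSum (fun t => (1-δ) * (δ ^ t * (if nt t = n then (1:ℝ) else 0))) (v0 n) := by
    rw [hasSum_iff_tendsto_nat_of_nonneg]
    · have : (fun T => ∑ t ∈ Finset.range T,
          (1-δ) * (δ ^ t * (if nt t = n then (1:ℝ) else 0)))
          = fun T => v 0 n - δ ^ T * v T n := by
        funext T
        have := htel T
        linarith
      rw [this, hinit]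
      have := Filter.Tendsto.sub (tendsto_const_nhds (x := v0 n)) htail
      simpa using this
    · intro t
      apply mul_nonneg (by linarith)
      positivity
  rw [← tsum_mul_left]
  exact hHasSum.tsum_eq
end
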